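/- Let k ≥ 2 and ε > 0. There exists n₀ such that for n > n₀·√((6k−8)(3k−2)), every 3-uniform hypergraph H on n vertices with no Berge k-book satisfies: the subhypergraph H₂ of hyperedges containing at least two blue pairs has e(H₂) ≤ ε·n², assuming the Ruzsa–Szemerédi bound ex₃^lin(m, C₃) ≤ ε·m² for m > n₀. -/

import Mathlib

/-- A Berge triangle in a hypergraph. -/
def HasBergeTriangle {V : Type*} (H : Finset (Finset V)) : Prop :=
  ∃ (v₁ v₂ v₃ : V) (h₁ h₂ h₃ : Finset V),
    v₁ ≠ v₂ ∧ v₂ ≠ v₃ ∧ v₁ ≠ v₃ ∧ h₁ ≠ h₂ ∧ h₂ ≠ h₃ ∧ h₁ ≠ h₃ ∧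
    h₁ ∈ H ∧ h₂ ∈ H ∧ h₃ ∈ H ∧
    v₁ ∈ h₁ ∧ v₂ ∈ h₁ ∧ v₂ ∈ h₂ ∧ v₃ ∈ h₂ ∧ v₃ ∈ h₃ ∧ v₁ ∈ h₃

/-- A Berge `k`-book: `k` Berge triangles on a common base pair `{u,v}`
(base hyperedge `e₀` possibly shared), with all involved hyperedges distinct. -/
def HasBergeBook {V : Type*} (H : Finset (Finset V)) (k : ℕ) : Prop :=
  ∃ (u v : V) (x : Fin k → V) (e₀ : Finset V) (f g : Fin k → Finset V),
    u ≠ v ∧ Function.Injective x ∧ (∀ i, x i ≠ u ∧ x i ≠ v) ∧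
    e₀ ∈ H ∧ u ∈ e₀ ∧ v ∈ e₀ ∧
    (∀ i, f i ∈ H ∧ g i ∈ H ∧ u ∈ f i ∧ x i ∈ f i ∧ v ∈ g i ∧ x i ∈ g i) ∧
    Function.Injective f ∧ Function.Injective g ∧
    (∀ i j, f i ≠ g j) ∧ (∀ i, e₀ ≠ f i ∧ e₀ ≠ g i)

/-- A pair (2-element set) `p` is blue if at least two hyperedges of `H` contain it. -/
def BluePair {V : Type*} [DecidableEq V] (H : Finset (Finset V)) (p : Finset V) : Prop :=
  2 ≤ (H.filter (fun h => p ⊆ h)).card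

instance {V : Type*} [DecidableEq V] (H : Finset (Finset V)) :
    DecidablePred (BluePair H) := fun p => by unfold BluePair; infer_instance

namespace BergeAux

open Finset

variable {n : ℕ}

/-- The family of hyperedges with at least two blue pairs. -/
def H2filt (H : Finset (Finset (Fin n))) : Finset (Finset (Fin n)) :=
  H.filter (fun e =>
    2 ≤ ((e.powersetCard 2).filter (fun p => BluePair H p)).card)

lemma H2filt_subset (H : Finset (Finset (Fin n))) : H2filt H ⊆ H := filter_subset _ _

/-- Apex set of a pair `(u,v)`: vertices `z` joined to `u` and to `v` by two distinct
hyperedges. -/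
def Apx (H : Finset (Finset (Fin n))) (u v : Fin n) : Finset (Fin n) :=
  Finset.univ.filter (fun z => z ≠ u ∧ z ≠ v ∧ ∃ a ∈ H, ∃ b ∈ H,
    a ≠ b ∧ u ∈ a ∧ z ∈ a ∧ v ∈ b ∧ z ∈ b)

lemma mem_Apx {H : Finset (Finset (Fin n))} {u v z : Fin n} :
    z ∈ Apx H u v ↔ z ≠ u ∧ z ≠ v ∧ ∃ a ∈ H, ∃ b ∈ H,
      a ≠ b ∧ u ∈ a ∧ z ∈ a ∧ v ∈ b ∧ z ∈ b := by
  simp [Apx]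

lemma pair_eq_of_subset_triple {x y z : Fin n} {p : Finset (Fin n)}
    (hp : p ⊆ {x, y, z}) (h2 : p.card = 2) :
    p = {x, y} ∨ p = {x, z} ∨ p = {y, z} := by
  obtain ⟨a, b, hab, rfl⟩ := Finset.card_eq_two.mp h2
  have ha := hp (mem_insert_self _ _)
  have hb := hp (mem_insert_of_mem (mem_singleton_self _))
  simp only [mem_insert, mem_singleton] at ha hb
  rcases ha with rfl | rfl | rfl <;> rcases hb with rfl | rfl | rfl
  · exact absurd rfl hab
  · exact Or.inl rfl
  · exact Or.inr (Or.inl rfl)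
  · exact Or.inl (Finset.pair_comm _ _)
  · exact absurd rfl hab
  · exact Or.inr (Or.inr rfl)
  · exact Or.inr (Or.inl (Finset.pair_comm _ _))
  · exact Or.inr (Or.inr (Finset.pair_comm _ _))
  · exact absurd rfl hab

lemma blue_witness {H : Finset (Finset (Fin n))} {p e : Finset (Fin n)}
    (he : e ∈ H) (hpe : p ⊆ e) (hblue : BluePair H p) :
    ∃ w ∈ H, p ⊆ w ∧ w ≠ e := by
  have he' : e ∈ H.filter (fun h => p ⊆ h) := mem_filter.mpr ⟨he, hpe⟩
  unfold BluePair at hblue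
  have hcard := Finset.card_erase_of_mem he'
  have hpos : 0 < ((H.filter (fun h => p ⊆ h)).erase e).card := by omega
  obtain ⟨w, hw⟩ := Finset.card_pos.mp hpos
  have hw' := Finset.mem_of_mem_erase hw
  exact ⟨w, (mem_filter.mp hw').1, (mem_filter.mp hw').2, Finset.ne_of_mem_erase hw⟩

lemma eq_triple {e : Finset (Fin n)} (h3 : e.card = 3) {x y z : Fin n}
    (hx : x ∈ e) (hy : y ∈ e) (hz : z ∈ e) (hxy : x ≠ y) (hxz : x ≠ z) (hyz : y ≠ z) :
    e = {x, y, z} := by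
  have hsub : ({x, y, z} : Finset (Fin n)) ⊆ e := by
    intro w hw
    simp only [mem_insert, mem_singleton] at hw
    rcases hw with rfl | rfl | rfl <;> assumption
  have hcard : ({x, y, z} : Finset (Fin n)).card = 3 := by
    rw [card_insert_of_notMem (by simp [hxy, hxz]),
      card_insert_of_notMem (by simp [hyz]), card_singleton]
  exact (Finset.eq_of_subset_of_card_le hsub (by omega)).symm

lemma apex_of_H2 {H : Finset (Finset (Fin n))} (h3 : ∀ e ∈ H, e.card = 3)
    {e : Finset (Fin n)} (he : e ∈ H2filt H) {x y z : Fin n}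
    (hx : x ∈ e) (hy : y ∈ e) (hz : z ∈ e) (hxy : x ≠ y) (hxz : x ≠ z) (hyz : y ≠ z) :
    z ∈ Apx H x y := by
  have heH : e ∈ H := (mem_filter.mp he).1
  have hblue2 : 2 ≤ ((e.powersetCard 2).filter (fun p => BluePair H p)).card :=
    (mem_filter.mp he).2
  have hetriple : e = {x, y, z} := eq_triple (h3 e heH) hx hy hz hxy hxz hyz
  have hxzsub : ({x, z} : Finset (Fin n)) ⊆ e := by
    intro w hw
    simp only [mem_insert, mem_singleton] at hw
    rcases hw with rfl | rfl <;> assumption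
  have hyzsub : ({y, z} : Finset (Fin n)) ⊆ e := by
    intro w hw
    simp only [mem_insert, mem_singleton] at hw
    rcases hw with rfl | rfl <;> assumption
  have hkey : BluePair H {x, z} ∨ BluePair H {y, z} := by
    by_contra hcon
    push_neg at hcon
    have hsub : (e.powersetCard 2).filter (fun p => BluePair H p)
        ⊆ {({x, y} : Finset (Fin n))} := by
      intro p hp
      have hp1 := (mem_filter.mp hp).1
      have hblue := (mem_filter.mp hp).2
      rw [Finset.mem_powersetCard] at hp1
      have hcases := pair_eq_of_subset_triple (hetriple ▸ hp1.1) hp1.2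
      rcases hcases with h | h | h
      · simp [h]
      · exact absurd (h ▸ hblue) hcon.1
      · exact absurd (h ▸ hblue) hcon.2
    have := Finset.card_le_card hsub
    simp only [Finset.card_singleton] at this
    omega
  rw [mem_Apx]
  refine ⟨Ne.symm hxz, Ne.symm hyz, ?_⟩
  rcases hkey with hb | hb
  · obtain ⟨w, hwH, hpw, hwe⟩ := blue_witness heH hxzsub hb
    exact ⟨w, hwH, e, heH, hwe, hpw (mem_insert_self _ _), hpw (mem_insert_of_mem (mem_singleton_self _)), hy, hz⟩
  · obtain ⟨w, hwH, hpw, hwe⟩ := blue_witness heH hyzsub hb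
    exact ⟨e, heH, w, hwH, Ne.symm hwe, hx, hz, hpw (mem_insert_self _ _), hpw (mem_insert_of_mem (mem_singleton_self _))⟩

lemma exists_injOn_image_half {α β : Type*} [DecidableEq α] [DecidableEq β]
    (s : Finset α) (f : α → β)
    (hfib : ∀ w ∈ s.image f, (s.filter (fun z => f z = w)).card ≤ 2) :
    ∃ t ⊆ s, Set.InjOn f ↑t ∧ s.card ≤ 2 * t.card := by
  rcases s.eq_empty_or_nonempty with rfl | ⟨z₀, hz₀⟩
  · exact ⟨∅, by simp, by simp, by simp⟩
  have hsec : ∀ w : β, ∃ z : α, w ∈ s.image f → z ∈ s ∧ f z = w := by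
    intro w
    by_cases hw : w ∈ s.image f
    · obtain ⟨z, hz, hfz⟩ := Finset.mem_image.mp hw
      exact ⟨z, fun _ => ⟨hz, hfz⟩⟩
    · exact ⟨z₀, fun h => absurd h hw⟩
  choose sec hsec using hsec
  refine ⟨(s.image f).image sec, ?_, ?_, ?_⟩
  · intro z hz
    obtain ⟨w, hw, rfl⟩ := Finset.mem_image.mp hz
    exact (hsec w hw).1
  · intro z1 h1 z2 h2 heq
    rw [Finset.coe_image] at h1 h2
    obtain ⟨w1, hw1, rfl⟩ := h1
    obtain ⟨w2, hw2, rfl⟩ := h2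
    rw [Finset.mem_coe] at hw1 hw2
    have : w1 = w2 := by
      rw [← (hsec w1 hw1).2, ← (hsec w2 hw2).2, heq]
    rw [this]
  · have h1 := Finset.card_le_mul_card_image s 2 hfib
    have h2 : ((s.image f).image sec).card = (s.image f).card := by
      apply Finset.card_image_of_injOn
      intro w1 hw1 w2 hw2 hseceq
      rw [Finset.mem_coe] at hw1 hw2
      rw [← (hsec w1 hw1).2, ← (hsec w2 hw2).2, hseceq]
    omega

lemma apex_bound {k : ℕ} {H : Finset (Finset (Fin n))} (h3 : ∀ e ∈ H, e.card = 3)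
    (hbook : ¬ HasBergeBook H k) {u v : Fin n} (huv : u ≠ v)
    {e₀ : Finset (Fin n)} (he₀ : e₀ ∈ H) (hu : u ∈ e₀) (hv : v ∈ e₀) :
    (Apx H u v).card ≤ 4 * k + 1 := by
  by_contra hcon
  push_neg at hcon
  apply hbook
  have hch : ∀ z : Fin n, ∃ ab : Finset (Fin n) × Finset (Fin n), z ∈ Apx H u v →
      ab.1 ∈ H ∧ ab.2 ∈ H ∧ ab.1 ≠ ab.2 ∧ u ∈ ab.1 ∧ z ∈ ab.1 ∧ v ∈ ab.2 ∧ z ∈ ab.2 := by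
    intro z
    by_cases hz : z ∈ Apx H u v
    · rw [mem_Apx] at hz
      obtain ⟨-, -, a, ha, b, hb, hab, h1, h2, h3', h4⟩ := hz
      exact ⟨(a, b), fun _ => ⟨ha, hb, hab, h1, h2, h3', h4⟩⟩
    · exact ⟨(∅, ∅), fun h => absurd h hz⟩
  choose ab hab using hch
  set s1 := (Apx H u v).filter (fun z => (ab z).1 ≠ e₀ ∧ (ab z).2 ≠ e₀) with hs1
  have hs1sub : s1 ⊆ Apx H u v := filter_subset _ _
  have hcard1 : 4 * k ≤ s1.card := by
    have hdiff : Apx H u v \ s1 ⊆ (e₀.erase u).erase v := by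
      intro z hz
      rw [Finset.mem_sdiff] at hz
      obtain ⟨hzA, hzn⟩ := hz
      rw [hs1, mem_filter] at hzn
      push_neg at hzn
      have h := hab z hzA
      have hzu : z ≠ u := (mem_Apx.mp hzA).1
      have hzv : z ≠ v := (mem_Apx.mp hzA).2.1
      have hze : z ∈ e₀ := by
        by_cases h1 : (ab z).1 = e₀
        · exact h1 ▸ h.2.2.2.2.1
        · have h2 := hzn hzA h1
          exact h2 ▸ h.2.2.2.2.2.2
      exact Finset.mem_erase.mpr ⟨hzv, Finset.mem_erase.mpr ⟨hzu, hze⟩⟩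
    have hv' : v ∈ e₀.erase u := Finset.mem_erase.mpr ⟨Ne.symm huv, hv⟩
    have hc1 : ((e₀.erase u).erase v).card ≤ 1 := by
      rw [Finset.card_erase_of_mem hv', Finset.card_erase_of_mem hu, h3 e₀ he₀]
    have hsplit := Finset.card_sdiff_add_card_eq_card hs1sub
    have hd := Finset.card_le_card hdiff
    omega
  have hfa : ∀ w ∈ s1.image (fun z => (ab z).1),
      (s1.filter (fun z => (ab z).1 = w)).card ≤ 2 := by
    intro w hw
    obtain ⟨z₁, hz₁, rfl⟩ := Finset.mem_image.mp hw
    have hsub : s1.filter (fun z => (ab z).1 = (ab z₁).1) ⊆ ((ab z₁).1).erase u := by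
      intro z hz
      have hz' := mem_filter.mp hz
      refine Finset.mem_erase.mpr ⟨(mem_Apx.mp (hs1sub hz'.1)).1, ?_⟩
      rw [← hz'.2]
      exact (hab z (hs1sub hz'.1)).2.2.2.2.1
    have hc : (((ab z₁).1).erase u).card ≤ 2 := by
      rw [Finset.card_erase_of_mem (hab z₁ (hs1sub hz₁)).2.2.2.1,
        h3 _ (hab z₁ (hs1sub hz₁)).1]
    exact le_trans (Finset.card_le_card hsub) hc
  obtain ⟨t1, ht1sub, hinj1, ht1card⟩ := exists_injOn_image_half s1 (fun z => (ab z).1) hfa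
  have hfb : ∀ w ∈ t1.image (fun z => (ab z).2),
      (t1.filter (fun z => (ab z).2 = w)).card ≤ 2 := by
    intro w hw
    obtain ⟨z₁, hz₁, rfl⟩ := Finset.mem_image.mp hw
    have hsub : t1.filter (fun z => (ab z).2 = (ab z₁).2) ⊆ ((ab z₁).2).erase v := by
      intro z hz
      have hz' := mem_filter.mp hz
      refine Finset.mem_erase.mpr ⟨(mem_Apx.mp (hs1sub (ht1sub hz'.1))).2.1, ?_⟩
      rw [← hz'.2]
      exact (hab z (hs1sub (ht1sub hz'.1))).2.2.2.2.2.2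
    have hc : (((ab z₁).2).erase v).card ≤ 2 := by
      rw [Finset.card_erase_of_mem (hab z₁ (hs1sub (ht1sub hz₁))).2.2.2.2.2.1,
        h3 _ (hab z₁ (hs1sub (ht1sub hz₁))).2.1]
    exact le_trans (Finset.card_le_card hsub) hc
  obtain ⟨t2, ht2sub, hinj2, ht2card⟩ := exists_injOn_image_half t1 (fun z => (ab z).2) hfb
  have ht2k : k ≤ t2.card := by omega
  obtain ⟨t3, ht3sub, ht3card⟩ := Finset.exists_subset_card_eq ht2k
  let φ := t3.orderIsoOfFin ht3card
  have hmemt2 : ∀ i : Fin k, ((φ i : Fin n)) ∈ t2 := fun i => ht3sub (φ i).2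
  have hmemt1 : ∀ i : Fin k, ((φ i : Fin n)) ∈ t1 := fun i => ht2sub (hmemt2 i)
  have hmem : ∀ i : Fin k, ((φ i : Fin n)) ∈ s1 := fun i => ht1sub (hmemt1 i)
  have hmemA : ∀ i : Fin k, ((φ i : Fin n)) ∈ Apx H u v := fun i => hs1sub (hmem i)
  have hzinj : ∀ i j : Fin k, (φ i : Fin n) = (φ j : Fin n) → i = j :=
    fun i j h => φ.injective (Subtype.ext h)
  have hprops := fun i : Fin k => hab _ (hmemA i)
  refine ⟨u, v, fun i => (φ i : Fin n), e₀,
    fun i => (ab (φ i : Fin n)).1, fun i => (ab (φ i : Fin n)).2,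
    huv, fun i j h => hzinj i j h,
    fun i => ⟨(mem_Apx.mp (hmemA i)).1, (mem_Apx.mp (hmemA i)).2.1⟩,
    he₀, hu, hv,
    fun i => ⟨(hprops i).1, (hprops i).2.1, (hprops i).2.2.2.1,
      (hprops i).2.2.2.2.1, (hprops i).2.2.2.2.2.1, (hprops i).2.2.2.2.2.2⟩,
    ?_, ?_, ?_, ?_⟩
  · intro i j hij
    exact hzinj i j (hinj1 (Finset.mem_coe.mpr (hmemt1 i)) (Finset.mem_coe.mpr (hmemt1 j)) hij)
  · intro i j hij
    exact hzinj i j (hinj2 (Finset.mem_coe.mpr (hmemt2 i)) (Finset.mem_coe.mpr (hmemt2 j)) hij)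
  · intro i j heq
    have heq' : (ab ((φ i : Fin n))).1 = (ab ((φ j : Fin n))).2 := heq
    by_cases hij : i = j
    · subst hij
      exact (hprops i).2.2.1 heq'
    · have hzij : (φ i : Fin n) ≠ (φ j : Fin n) := fun h => hij (hzinj i j h)
      have hi := hprops i
      have hj := hprops j
      have hsub4 : ({u, v, (φ i : Fin n), (φ j : Fin n)} : Finset (Fin n))
          ⊆ (ab (φ i : Fin n)).1 := by
        intro w hw
        simp only [mem_insert, mem_singleton] at hw
        rcases hw with rfl | rfl | rfl | rfl
        · exact hi.2.2.2.1
        · rw [heq']; exact hj.2.2.2.2.2.1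
        · exact hi.2.2.2.2.1
        · rw [heq']; exact hj.2.2.2.2.2.2
      have hzu_i : (φ i : Fin n) ≠ u := (mem_Apx.mp (hmemA i)).1
      have hzv_i : (φ i : Fin n) ≠ v := (mem_Apx.mp (hmemA i)).2.1
      have hzu_j : (φ j : Fin n) ≠ u := (mem_Apx.mp (hmemA j)).1
      have hzv_j : (φ j : Fin n) ≠ v := (mem_Apx.mp (hmemA j)).2.1
      have hc4 : ({u, v, (φ i : Fin n), (φ j : Fin n)} : Finset (Fin n)).card = 4 := by
        rw [card_insert_of_notMem (by simp [huv, Ne.symm hzu_i, Ne.symm hzu_j]),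
          card_insert_of_notMem (by simp [Ne.symm hzv_i, Ne.symm hzv_j]),
          card_insert_of_notMem (by simp [hzij]), card_singleton]
      have hle := Finset.card_le_card hsub4
      rw [hc4, h3 _ hi.1] at hle
      omega
  · intro i
    have hfil := (mem_filter.mp (hmem i)).2
    exact ⟨fun h => hfil.1 h.symm, fun h => hfil.2 h.symm⟩

lemma codeg_bound {k : ℕ} {H : Finset (Finset (Fin n))} (h3 : ∀ e ∈ H, e.card = 3)
    (hbook : ¬ HasBergeBook H k) {u v : Fin n} (huv : u ≠ v) :
    ((H2filt H).filter (fun e => u ∈ e ∧ v ∈ e)).card ≤ 4 * k + 1 := by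
  rcases ((H2filt H).filter (fun e => u ∈ e ∧ v ∈ e)).eq_empty_or_nonempty with h | ⟨e₀, he₀⟩
  · rw [h]; simp
  have he₀H2 := (mem_filter.mp he₀).1
  have he₀H : e₀ ∈ H := (mem_filter.mp he₀H2).1
  have hue₀ := (mem_filter.mp he₀).2.1
  have hve₀ := (mem_filter.mp he₀).2.2
  have hch : ∀ e : Finset (Fin n), ∃ z : Fin n,
      e ∈ (H2filt H).filter (fun e => u ∈ e ∧ v ∈ e) →
      z ∈ Apx H u v ∧ e = {u, v, z} := by
    intro e
    by_cases he : e ∈ (H2filt H).filter (fun e => u ∈ e ∧ v ∈ e)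
    · have heH2 := (mem_filter.mp he).1
      have heH : e ∈ H := (mem_filter.mp heH2).1
      have hue := (mem_filter.mp he).2.1
      have hve := (mem_filter.mp he).2.2
      have hcard := h3 e heH
      have hne : (e \ {u, v}).Nonempty := by
        apply Finset.card_pos.mp
        have hsub : ({u, v} : Finset (Fin n)) ⊆ e := by
          intro w hw
          simp only [mem_insert, mem_singleton] at hw
          rcases hw with rfl | rfl <;> assumption
        rw [Finset.card_sdiff_of_subset hsub, Finset.card_pair huv, hcard]
        omega
      obtain ⟨z, hz⟩ := hne
      rw [Finset.mem_sdiff] at hz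
      have hzmem := hz.1
      have hzu : z ≠ u := fun h => hz.2 (by simp [h])
      have hzv : z ≠ v := fun h => hz.2 (by simp [h])
      exact ⟨z, fun _ =>
        ⟨apex_of_H2 h3 heH2 hue hve hzmem huv (Ne.symm hzu) (Ne.symm hzv),
         eq_triple hcard hue hve hzmem huv (Ne.symm hzu) (Ne.symm hzv)⟩⟩
    · exact ⟨u, fun h => absurd h he⟩
  choose ζ hζ using hch
  have hmaps : ∀ e ∈ (H2filt H).filter (fun e => u ∈ e ∧ v ∈ e), ζ e ∈ Apx H u v :=
    fun e he => (hζ e he).1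
  have hinj : Set.InjOn ζ ↑((H2filt H).filter (fun e => u ∈ e ∧ v ∈ e)) := by
    intro e1 h1 e2 h2 heq
    rw [Finset.mem_coe] at h1 h2
    rw [(hζ e1 h1).2, (hζ e2 h2).2, heq]
  exact le_trans (Finset.card_le_card_of_injOn ζ hmaps hinj)
    (apex_bound h3 hbook huv he₀H hue₀ hve₀)

/-- The tripartite auxiliary graph. -/
def BG (H : Finset (Finset (Fin n))) : SimpleGraph (Fin n × Fin 3) where
  Adj p q := p.2 ≠ q.2 ∧ p.1 ≠ q.1 ∧ ∃ e ∈ H2filt H, p.1 ∈ e ∧ q.1 ∈ e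
  symm := by
    constructor
    rintro p q ⟨h1, h2, e, he, hp, hq⟩
    exact ⟨h1.symm, h2.symm, e, he, hq, hp⟩
  loopless := ⟨fun p h => h.1 rfl⟩

instance (H : Finset (Finset (Fin n))) : DecidableRel (BG H).Adj :=
  fun p q => inferInstanceAs
    (Decidable (p.2 ≠ q.2 ∧ p.1 ≠ q.1 ∧ ∃ e ∈ H2filt H, p.1 ∈ e ∧ q.1 ∈ e))

lemma clique_shape {H : Finset (Finset (Fin n))} {T : Finset (Fin n × Fin 3)}
    (hT : T ∈ (BG H).cliqueFinset 3) :
    ∃ x y z : Fin n, T = {(x, 0), (y, 1), (z, 2)} ∧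
      (BG H).Adj (x, 0) (y, 1) ∧ (BG H).Adj (x, 0) (z, 2) ∧ (BG H).Adj (y, 1) (z, 2) := by
  rw [SimpleGraph.mem_cliqueFinset_iff, SimpleGraph.is3Clique_iff] at hT
  obtain ⟨p, q, r, hpq, hpr, hqr, rfl⟩ := hT
  obtain ⟨p1, p2⟩ := p
  obtain ⟨q1, q2⟩ := q
  obtain ⟨r1, r2⟩ := r
  have hpq2 : p2 ≠ q2 := hpq.1
  have hpr2 : p2 ≠ r2 := hpr.1
  have hqr2 : q2 ≠ r2 := hqr.1
  have h3 : ∀ i : Fin 3, i = 0 ∨ i = 1 ∨ i = 2 := by decide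
  rcases h3 p2 with rfl | rfl | rfl <;> rcases h3 q2 with rfl | rfl | rfl <;>
      rcases h3 r2 with rfl | rfl | rfl <;>
    first
      | exact absurd rfl hpq2
      | exact absurd rfl hpr2
      | exact absurd rfl hqr2
      | exact ⟨p1, q1, r1, by ext w; simp only [mem_insert, mem_singleton]; try tauto,
          hpq, hpr, hqr⟩
      | exact ⟨p1, r1, q1, by ext w; simp only [mem_insert, mem_singleton]; try tauto,
          hpr, hpq, hqr.symm⟩
      | exact ⟨q1, p1, r1, by ext w; simp only [mem_insert, mem_singleton]; try tauto,
          hpq.symm, hqr, hpr⟩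
      | exact ⟨r1, p1, q1, by ext w; simp only [mem_insert, mem_singleton]; try tauto,
          hpr.symm, hqr.symm, hpq⟩
      | exact ⟨q1, r1, p1, by ext w; simp only [mem_insert, mem_singleton]; try tauto,
          hqr, hpq.symm, hpr.symm⟩
      | exact ⟨r1, q1, p1, by ext w; simp only [mem_insert, mem_singleton]; try tauto,
          hqr.symm, hpr.symm, hpq.symm⟩

lemma clique_card_bound {k : ℕ} {H : Finset (Finset (Fin n))}
    (h3 : ∀ e ∈ H, e.card = 3) (hbook : ¬ HasBergeBook H k) :
    ((BG H).cliqueFinset 3).card ≤ (4 * k + 1) * n ^ 2 := by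
  classical
  rcases ((BG H).cliqueFinset 3).eq_empty_or_nonempty with hemp | ⟨T₀, hT₀⟩
  · rw [hemp]; simp
  obtain ⟨x₀, y₀, z₀, -, -, -, -⟩ := clique_shape hT₀
  set Cov : Finset (Fin n × Fin n) := (Finset.univ ×ˢ Finset.univ).filter
    (fun st => st.1 ≠ st.2 ∧ ∃ e ∈ H, st.1 ∈ e ∧ st.2 ∈ e) with hCov
  set target := Cov.biUnion
    (fun st => (Apx H st.1 st.2).image (fun z => (st.1, st.2, z))) with htarget
  have hF : ∀ T : Finset (Fin n × Fin 3), ∃ xyz : Fin n × Fin n × Fin n,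
      T ∈ (BG H).cliqueFinset 3 →
      T = {(xyz.1, 0), (xyz.2.1, 1), (xyz.2.2, 2)} ∧ xyz ∈ target := by
    intro T
    by_cases hT : T ∈ (BG H).cliqueFinset 3
    · obtain ⟨x, y, z, hTeq, hxy, hxz, hyz⟩ := clique_shape hT
      refine ⟨(x, y, z), fun _ => ⟨hTeq, ?_⟩⟩
      obtain ⟨-, hnexy, e1, he1, hx1, hy1⟩ := hxy
      obtain ⟨-, hnexz, e2, he2, hx2, hz2⟩ := hxz
      obtain ⟨-, hneyz, e3, he3, hy3, hz3⟩ := hyz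
      have hzmem : z ∈ Apx H x y := by
        by_cases h23 : e2 = e3
        · exact apex_of_H2 h3 he2 hx2 (h23 ▸ hy3) hz2 hnexy hnexz hneyz
        · rw [mem_Apx]
          exact ⟨Ne.symm hnexz, Ne.symm hneyz, e2, H2filt_subset H he2, e3,
            H2filt_subset H he3, h23, hx2, hz2, hy3, hz3⟩
      rw [htarget, Finset.mem_biUnion]
      refine ⟨(x, y), ?_, Finset.mem_image_of_mem _ hzmem⟩
      rw [hCov, mem_filter]
      exact ⟨Finset.mem_product.mpr ⟨Finset.mem_univ _, Finset.mem_univ _⟩,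
        hnexy, e1, H2filt_subset H he1, hx1, hy1⟩
    · exact ⟨(x₀, x₀, x₀), fun h => absurd h hT⟩
  choose F hF using hF
  have hmaps : ∀ T ∈ (BG H).cliqueFinset 3, F T ∈ target := fun T hT => (hF T hT).2
  have hinj : Set.InjOn F ↑((BG H).cliqueFinset 3) := by
    intro T1 h1 T2 h2 heq
    rw [Finset.mem_coe] at h1 h2
    rw [(hF T1 h1).1, (hF T2 h2).1, heq]
  have h1 := Finset.card_le_card_of_injOn F hmaps hinj
  have h2 : target.card ≤ (4 * k + 1) * n ^ 2 := by
    refine le_trans Finset.card_biUnion_le ?_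
    have hsum : ∀ st ∈ Cov, ((Apx H st.1 st.2).image (fun z => (st.1, st.2, z))).card
        ≤ 4 * k + 1 := by
      intro st hst
      rw [hCov, mem_filter] at hst
      obtain ⟨-, hne, e, heH, hm1, hm2⟩ := hst
      exact le_trans Finset.card_image_le (apex_bound h3 hbook hne heH hm1 hm2)
    refine le_trans (Finset.sum_le_card_nsmul Cov _ (4 * k + 1) hsum) ?_
    have hCovcard : Cov.card ≤ n ^ 2 := by
      refine le_trans (Finset.card_le_card (filter_subset _ _)) ?_
      rw [Finset.card_product, Finset.card_univ, Fintype.card_fin]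
      rw [sq]
    rw [smul_eq_mul]
    calc Cov.card * (4 * k + 1) ≤ n ^ 2 * (4 * k + 1) :=
          Nat.mul_le_mul_right _ hCovcard
      _ = (4 * k + 1) * n ^ 2 := Nat.mul_comm _ _
  omega

end BergeAux

open BergeAux Finset in
/-- For `k ≥ 2`, `ε > 0` there is `n₀` such that, assuming the Ruzsa–Szemerédi bound
`ex₃^lin(m, C₃) ≤ ε m²` for `m > n₀`, every 3-uniform Berge-`k`-book-free hypergraph
on `n > n₀·√((6k−8)(3k−2))` vertices satisfies `e(H₂) ≤ ε n²`, where `H₂` consists of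
the hyperedges with at least two blue pairs. -/
theorem H2_bound (k : ℕ) (hk : 2 ≤ k) (ε : ℝ) (hε : 0 < ε) :
    ∃ n₀ : ℕ,
      (∀ m : ℕ, n₀ < m → ∀ H' : Finset (Finset (Fin m)),
        (∀ e ∈ H', e.card = 3) →
        (∀ e ∈ H', ∀ f ∈ H', e ≠ f → (e ∩ f).card ≤ 1) →
        ¬ HasBergeTriangle H' → (H'.card : ℝ) ≤ ε * (m : ℝ) ^ 2) →
      ∀ n : ℕ, (n : ℝ) > (n₀ : ℝ) * Real.sqrt ((6 * (k : ℝ) - 8) * (3 * (k : ℝ) - 2)) →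
        ∀ H : Finset (Finset (Fin n)), (∀ e ∈ H, e.card = 3) →
          ¬ HasBergeBook H k →
          (((H.filter (fun e =>
              2 ≤ ((e.powersetCard 2).filter (fun p => BluePair H p)).card)).card : ℝ))
            ≤ ε * (n : ℝ) ^ 2 := by
  classical
  have hApos : (0 : ℝ) < (4 * k + 1 : ℕ) := by positivity
  set ε₂ : ℝ := min (ε / (9 * ((4 * k + 1 : ℕ) : ℝ))) 1 with hε₂def
  have hε₂pos : 0 < ε₂ := lt_min (by positivity) one_pos
  have hε₂le : ε₂ ≤ 1 := min_le_right _ _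
  have hBpos := SimpleGraph.triangleRemovalBound_pos hε₂pos
  set B := SimpleGraph.triangleRemovalBound ε₂ with hBdef
  refine ⟨⌈(((4 * k + 1 : ℕ) : ℝ)) / (27 * B)⌉₊ + 1, fun _hyp n hn H h3 hbook => ?_⟩
  set n₀ : ℕ := ⌈(((4 * k + 1 : ℕ) : ℝ)) / (27 * B)⌉₊ + 1 with hn₀def
  -- basic numeric facts
  have hsqrt1 : (1 : ℝ) ≤ Real.sqrt ((6 * (k : ℝ) - 8) * (3 * (k : ℝ) - 2)) := by
    rw [show (1 : ℝ) = Real.sqrt 1 from Real.sqrt_one.symm]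
    apply Real.sqrt_le_sqrt
    have hk' : (2 : ℝ) ≤ (k : ℝ) := by exact_mod_cast hk
    nlinarith
  have hn₀n : (n₀ : ℝ) < (n : ℝ) :=
    lt_of_le_of_lt (le_mul_of_one_le_right (Nat.cast_nonneg _) hsqrt1) hn
  have hnn₀ : n₀ < n := by exact_mod_cast hn₀n
  have hn1 : 1 ≤ n := by omega
  have hnA : (((4 * k + 1 : ℕ) : ℝ)) < 27 * B * n := by
    have h1 : (((4 * k + 1 : ℕ) : ℝ)) / (27 * B) < (n₀ : ℝ) := by
      have hle := Nat.le_ceil ((((4 * k + 1 : ℕ) : ℝ)) / (27 * B))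
      have h2 : ((⌈(((4 * k + 1 : ℕ) : ℝ)) / (27 * B)⌉₊ : ℝ)) < (n₀ : ℝ) := by
        rw [hn₀def]
        push_cast
        linarith
      linarith
    have h2 : (((4 * k + 1 : ℕ) : ℝ)) / (27 * B) < (n : ℝ) := lt_trans h1 hn₀n
    have h27B : (0 : ℝ) < 27 * B := by positivity
    calc (((4 * k + 1 : ℕ) : ℝ)) = ((((4 * k + 1 : ℕ) : ℝ)) / (27 * B)) * (27 * B) := by
          field_simp
      _ < (n : ℝ) * (27 * B) := by
          apply mul_lt_mul_of_pos_right h2 h27B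
      _ = 27 * B * n := by ring
  -- triangle count precondition
  have hclique := clique_card_bound (k := k) h3 hbook
  have hpre : (((BG H).cliqueFinset 3).card : ℝ)
      < B * (Fintype.card (Fin n × Fin 3) : ℕ) ^ 3 := by
    have hcardW : (Fintype.card (Fin n × Fin 3) : ℕ) = n * 3 := by
      simp [Fintype.card_prod]
    rw [hcardW]
    have hnpos : (0 : ℝ) < (n : ℝ) := by exact_mod_cast hn1
    calc (((BG H).cliqueFinset 3).card : ℝ) ≤ ((4 * k + 1 : ℕ) : ℝ) * (n : ℝ) ^ 2 := by
          have := hclique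
          have hcast : (((BG H).cliqueFinset 3).card : ℝ)
              ≤ (((4 * k + 1) * n ^ 2 : ℕ) : ℝ) := by exact_mod_cast this
          calc (((BG H).cliqueFinset 3).card : ℝ) ≤ (((4 * k + 1) * n ^ 2 : ℕ) : ℝ) := hcast
            _ = ((4 * k + 1 : ℕ) : ℝ) * (n : ℝ) ^ 2 := by push_cast; ring
      _ < (27 * B * n) * (n : ℝ) ^ 2 := by
          apply mul_lt_mul_of_pos_right hnA
          positivity
      _ = B * ((n * 3 : ℕ) : ℝ) ^ 3 := by push_cast; ring
  obtain ⟨G', hG'le, hdec, hcut, hfree⟩ := SimpleGraph.triangle_removal hpre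
  -- removed edges
  set R := (BG H).edgeFinset \ G'.edgeFinset with hR
  have hRsub : G'.edgeFinset ⊆ (BG H).edgeFinset :=
    SimpleGraph.edgeFinset_subset_edgeFinset.mpr hG'le
  have hRcard : (R.card : ℝ) < ε₂ * ((Fintype.card (Fin n × Fin 3)) ^ 2 : ℕ) := by
    rw [hR, Finset.card_sdiff_of_subset hRsub, Nat.cast_sub (Finset.card_le_card hRsub)]
    exact hcut
  -- trivial case : H₂ empty
  rcases (H2filt H).eq_empty_or_nonempty with hH2e | ⟨efirst, hefirst⟩
  · have : (H.filter (fun e =>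
        2 ≤ ((e.powersetCard 2).filter (fun p => BluePair H p)).card)) = ∅ := hH2e
    rw [this]
    simp only [Finset.card_empty, Nat.cast_zero]
    positivity
  have hef3 : efirst.card = 3 := h3 efirst (H2filt_subset H hefirst)
  have hefne : efirst.Nonempty := Finset.card_pos.mp (by omega)
  obtain ⟨x₀, -⟩ := hefne
  -- charging map
  have hkill : ∀ e : Finset (Fin n), ∃ pq : (Fin n × Fin 3) × (Fin n × Fin 3),
      e ∈ H2filt H →
      (s(pq.1, pq.2) ∈ R ∧ pq.1.1 ∈ e ∧ pq.2.1 ∈ e ∧ pq.1.1 ≠ pq.2.1) := by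
    intro e
    by_cases he : e ∈ H2filt H
    · have heH : e ∈ H := H2filt_subset H he
      obtain ⟨x, y, z, hxy, hxz, hyz, hexyz⟩ := Finset.card_eq_three.mp (h3 e heH)
      have hx : x ∈ e := by rw [hexyz]; simp
      have hy : y ∈ e := by rw [hexyz]; simp
      have hz : z ∈ e := by rw [hexyz]; simp
      have hne01 : ((0 : Fin 3)) ≠ 1 := by decide
      have hne02 : ((0 : Fin 3)) ≠ 2 := by decide
      have hne12 : ((1 : Fin 3)) ≠ 2 := by decide
      have hadj1 : (BG H).Adj (x, 0) (y, 1) := ⟨hne01, hxy, e, he, hx, hy⟩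
      have hadj2 : (BG H).Adj (x, 0) (z, 2) := ⟨hne02, hxz, e, he, hx, hz⟩
      have hadj3 : (BG H).Adj (y, 1) (z, 2) := ⟨hne12, hyz, e, he, hy, hz⟩
      have hnotc : ¬ (G'.Adj (x, 0) (y, 1) ∧ G'.Adj (x, 0) (z, 2) ∧
          G'.Adj (y, 1) (z, 2)) := by
        intro hcl
        exact hfree {(x, 0), (y, 1), (z, 2)}
          (SimpleGraph.is3Clique_triple_iff.mpr ⟨hcl.1, hcl.2.1, hcl.2.2⟩)
      by_cases h1 : G'.Adj (x, 0) (y, 1)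
      · by_cases h2 : G'.Adj (x, 0) (z, 2)
        · have h3' : ¬ G'.Adj (y, 1) (z, 2) := fun hadj => hnotc ⟨h1, h2, hadj⟩
          refine ⟨((y, 1), (z, 2)), fun _ => ⟨?_, hy, hz, hyz⟩⟩
          rw [hR, Finset.mem_sdiff]
          constructor
          · rw [SimpleGraph.mem_edgeFinset]; exact hadj3
          · intro hmem
            rw [SimpleGraph.mem_edgeFinset] at hmem
            exact h3' hmem
        · refine ⟨((x, 0), (z, 2)), fun _ => ⟨?_, hx, hz, hxz⟩⟩
          rw [hR, Finset.mem_sdiff]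
          constructor
          · rw [SimpleGraph.mem_edgeFinset]; exact hadj2
          · intro hmem
            rw [SimpleGraph.mem_edgeFinset] at hmem
            exact h2 hmem
      · refine ⟨((x, 0), (y, 1)), fun _ => ⟨?_, hx, hy, hxy⟩⟩
        rw [hR, Finset.mem_sdiff]
        constructor
        · rw [SimpleGraph.mem_edgeFinset]; exact hadj1
        · intro hmem
          rw [SimpleGraph.mem_edgeFinset] at hmem
          exact h1 hmem
    · exact ⟨((x₀, 0), (x₀, 0)), fun h => absurd h he⟩
  choose χ hχ using hkill
  set f : Finset (Fin n) → Sym2 (Fin n × Fin 3) := fun e => s((χ e).1, (χ e).2) with hfdef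
  have hfibers : ∀ r ∈ (H2filt H).image f,
      ((H2filt H).filter (fun e => f e = r)).card ≤ 4 * k + 1 := by
    intro r hr
    obtain ⟨e₁, he₁, hfe₁⟩ := Finset.mem_image.mp hr
    have hprop := hχ e₁ he₁
    have hPQ : (χ e₁).1.1 ≠ (χ e₁).2.1 := hprop.2.2.2
    have hsub : (H2filt H).filter (fun e => f e = r)
        ⊆ (H2filt H).filter (fun e => (χ e₁).1.1 ∈ e ∧ (χ e₁).2.1 ∈ e) := by
      intro e he'
      obtain ⟨heH2, hfe⟩ := mem_filter.mp he'
      have h := hχ e heH2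
      rw [← hfe₁] at hfe
      have hfe' : s((χ e).1, (χ e).2) = s((χ e₁).1, (χ e₁).2) := hfe
      rcases Sym2.eq_iff.mp hfe' with ⟨ha, hb⟩ | ⟨ha, hb⟩
      · rw [mem_filter]
        refine ⟨heH2, ?_, ?_⟩
        · rw [← ha]; exact h.2.1
        · rw [← hb]; exact h.2.2.1
      · rw [mem_filter]
        refine ⟨heH2, ?_, ?_⟩
        · rw [← hb]; exact h.2.2.1
        · rw [← ha]; exact h.2.1
    exact le_trans (Finset.card_le_card hsub) (codeg_bound h3 hbook hPQ)
  have hH2bound : (H2filt H).card ≤ (4 * k + 1) * R.card := by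
    have h1 := Finset.card_le_mul_card_image (H2filt H) (4 * k + 1) hfibers
    have h2 : (H2filt H).image f ⊆ R := by
      intro r hr
      obtain ⟨e, he, rfl⟩ := Finset.mem_image.mp hr
      exact (hχ e he).1
    exact le_trans h1 (Nat.mul_le_mul_left _ (Finset.card_le_card h2))
  -- final arithmetic
  have hcardW2 : ((Fintype.card (Fin n × Fin 3)) ^ 2 : ℕ) = (n * 3) ^ 2 := by
    simp [Fintype.card_prod]
  have hfinal : ((H2filt H).card : ℝ) ≤ ε * (n : ℝ) ^ 2 := by
    have h1 : ((H2filt H).card : ℝ) ≤ ((4 * k + 1 : ℕ) : ℝ) * (R.card : ℝ) := by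
      exact_mod_cast hH2bound
    have h2 : (R.card : ℝ) < ε₂ * (((n * 3) ^ 2 : ℕ) : ℝ) := by
      rw [← hcardW2]; exact_mod_cast hRcard
    have h3' : (((n * 3) ^ 2 : ℕ) : ℝ) = 9 * (n : ℝ) ^ 2 := by push_cast; ring
    have hε₂small : ε₂ ≤ ε / (9 * ((4 * k + 1 : ℕ) : ℝ)) := min_le_left _ _
    have hRnn : (0 : ℝ) ≤ (R.card : ℝ) := Nat.cast_nonneg _
    calc ((H2filt H).card : ℝ) ≤ ((4 * k + 1 : ℕ) : ℝ) * (R.card : ℝ) := h1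
      _ ≤ ((4 * k + 1 : ℕ) : ℝ) * (ε₂ * (9 * (n : ℝ) ^ 2)) := by
          apply mul_le_mul_of_nonneg_left _ (le_of_lt hApos)
          rw [← h3']
          exact le_of_lt h2
      _ ≤ ((4 * k + 1 : ℕ) : ℝ) * ((ε / (9 * ((4 * k + 1 : ℕ) : ℝ))) * (9 * (n : ℝ) ^ 2)) := by
          apply mul_le_mul_of_nonneg_left _ (le_of_lt hApos)
          apply mul_le_mul_of_nonneg_right hε₂small
          positivity
      _ = ε * (n : ℝ) ^ 2 := by
          field_simp
  simpa only [H2filt] using hfinal
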